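/- For every w ∈ ℝ^d and every ρ ≥ 0, the mean of the Gibbs distribution with tilted parameter ρw is close to the uniform mean: ‖E_{x∼φ(·;ρw)}[x] − E_{x∼U(X)}[x]‖₂ ≤ 2ρ‖w‖₂D². -/

import Mathlib

open Finset
open scoped InnerProductSpace BigOperators

noncomputable section

/-- The Gibbs distribution on a finite set `X ⊆ ℝ^d` with parameter `w`:
`φ(x; w) = exp(w·x) / ∑_{y ∈ X} exp(w·y)`. -/
def gibbs {d : ℕ} (X : Finset (EuclideanSpace ℝ (Fin d)))
    (w x : EuclideanSpace ℝ (Fin d)) : ℝ :=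
  Real.exp ⟪w, x⟫_ℝ / ∑ y ∈ X, Real.exp ⟪w, y⟫_ℝ

/-- Expectation of a real function under the Gibbs distribution. -/
def gibbsExp {d : ℕ} (X : Finset (EuclideanSpace ℝ (Fin d)))
    (w : EuclideanSpace ℝ (Fin d)) (f : EuclideanSpace ℝ (Fin d) → ℝ) : ℝ :=
  ∑ x ∈ X, gibbs X w x * f x

/-- Variance of a real function under the Gibbs distribution. -/
def gibbsVar {d : ℕ} (X : Finset (EuclideanSpace ℝ (Fin d)))
    (w : EuclideanSpace ℝ (Fin d)) (f : EuclideanSpace ℝ (Fin d) → ℝ) : ℝ :=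
  gibbsExp X w (fun x => f x ^ 2) - (gibbsExp X w f) ^ 2

/-- Mean (a vector) of the Gibbs distribution. -/
def gibbsMean {d : ℕ} (X : Finset (EuclideanSpace ℝ (Fin d)))
    (w : EuclideanSpace ℝ (Fin d)) : EuclideanSpace ℝ (Fin d) :=
  ∑ x ∈ X, gibbs X w x • x

/-- The negative entropy `H(w) = E_{x ∼ φ(·;w)}[log φ(x;w)]`. -/
def negEnt {d : ℕ} (X : Finset (EuclideanSpace ℝ (Fin d)))
    (w : EuclideanSpace ℝ (Fin d)) : ℝ :=
  ∑ x ∈ X, gibbs X w x * Real.log (gibbs X w x)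


/-- Mean (a vector) of the uniform distribution on `X`. -/
def unifMean {d : ℕ} (X : Finset (EuclideanSpace ℝ (Fin d))) : EuclideanSpace ℝ (Fin d) :=
  (X.card : ℝ)⁻¹ • ∑ x ∈ X, x

/-- Expectation of a real function under the uniform distribution on `X`. -/
def unifExp {d : ℕ} (X : Finset (EuclideanSpace ℝ (Fin d)))
    (f : EuclideanSpace ℝ (Fin d) → ℝ) : ℝ :=
  (X.card : ℝ)⁻¹ * ∑ x ∈ X, f x

/-- Variance of a real function under the uniform distribution on `X`. -/
def unifVar {d : ℕ} (X : Finset (EuclideanSpace ℝ (Fin d)))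
    (f : EuclideanSpace ℝ (Fin d) → ℝ) : ℝ :=
  unifExp X (fun x => f x ^ 2) - (unifExp X f) ^ 2

lemma gibbs_zero {d : ℕ} (X : Finset (EuclideanSpace ℝ (Fin d))) (x : EuclideanSpace ℝ (Fin d)) :
    gibbs X 0 x = (X.card : ℝ)⁻¹ := by
  simp [gibbs, inner_zero_left, Real.exp_zero, one_div]

lemma gibbsMean_zero {d : ℕ} (X : Finset (EuclideanSpace ℝ (Fin d))) :
    gibbsMean X 0 = unifMean X := by
  simp [gibbsMean, unifMean, gibbs_zero, Finset.smul_sum]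

lemma abs_sum_exp_mul_le {α : Type*} (s : Finset α) (e g : α → ℝ)
    (he : ∀ x ∈ s, 0 ≤ e x) (M : ℝ) (hg : ∀ x ∈ s, |g x| ≤ M) :
    |∑ x ∈ s, e x * g x| ≤ M * ∑ x ∈ s, e x := by
  calc |∑ x ∈ s, e x * g x| ≤ ∑ x ∈ s, |e x * g x| := Finset.abs_sum_le_sum_abs _ _
    _ ≤ ∑ x ∈ s, e x * M := Finset.sum_le_sum fun x hx => by
        rw [abs_mul, abs_of_nonneg (he x hx)]
        exact mul_le_mul_of_nonneg_left (hg x hx) (he x hx)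
    _ = M * ∑ x ∈ s, e x := by rw [← Finset.sum_mul]; ring

/-- Key 1-D estimate: the exp-tilted weighted average moves at rate at most `2·A·C`. -/
lemma tilted_avg_diff_le {α : Type*} (X : Finset α) (hX : X.Nonempty) (a c : α → ℝ)
    (A C : ℝ) (hA : 0 ≤ A) (hC : 0 ≤ C)
    (ha : ∀ x ∈ X, |a x| ≤ A) (hc : ∀ x ∈ X, |c x| ≤ C)
    (ρ : ℝ) (hρ : 0 < ρ) :
    |(∑ x ∈ X, Real.exp (ρ * a x) * c x) / (∑ x ∈ X, Real.exp (ρ * a x)) -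
      (∑ x ∈ X, Real.exp (0 * a x) * c x) / (∑ x ∈ X, Real.exp (0 * a x))| ≤
      2 * ρ * A * C := by
  set Z : ℝ → ℝ := fun s => ∑ x ∈ X, Real.exp (s * a x) with hZ_def
  set N : ℝ → ℝ := fun s => ∑ x ∈ X, Real.exp (s * a x) * c x with hN_def
  set Z' : ℝ → ℝ := fun s => ∑ x ∈ X, Real.exp (s * a x) * a x with hZ'_def
  set N' : ℝ → ℝ := fun s => ∑ x ∈ X, Real.exp (s * a x) * (a x * c x) with hN'_def
  have hZpos : ∀ s, 0 < Z s := fun s => Finset.sum_pos (fun x _ => Real.exp_pos _) hX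
  set f : ℝ → ℝ := fun s => N s / Z s with hf_def
  have hderiv : ∀ s : ℝ, HasDerivAt f ((N' s * Z s - N s * Z' s) / (Z s) ^ 2) s := by
    intro s
    have hZd : HasDerivAt Z (Z' s) s := by
      apply HasDerivAt.fun_sum
      intro x hx
      simpa using ((hasDerivAt_id s).mul_const (a x)).exp
    have hNd : HasDerivAt N (N' s) s := by
      apply HasDerivAt.fun_sum
      intro x hx
      simpa [mul_assoc] using (((hasDerivAt_id s).mul_const (a x)).exp.mul_const (c x))
    exact hNd.div hZd (ne_of_gt (hZpos s))
  have hbound : ∀ s : ℝ, |(N' s * Z s - N s * Z' s) / (Z s) ^ 2| ≤ 2 * A * C := by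
    intro s
    have hZnn : ∀ x ∈ X, (0:ℝ) ≤ Real.exp (s * a x) := fun x _ => (Real.exp_pos _).le
    have hZp := hZpos s
    have hN'b : |N' s| ≤ A * C * Z s := by
      apply abs_sum_exp_mul_le X _ _ hZnn
      intro x hx
      rw [abs_mul]
      exact mul_le_mul (ha x hx) (hc x hx) (abs_nonneg _) hA
    have hNb : |N s| ≤ C * Z s := abs_sum_exp_mul_le X _ _ hZnn C hc
    have hZ'b : |Z' s| ≤ A * Z s := abs_sum_exp_mul_le X _ _ hZnn A ha
    have e1 : |N' s| * Z s ≤ A * C * Z s * Z s := mul_le_mul_of_nonneg_right hN'b hZp.le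
    have e2 : |N s| * |Z' s| ≤ (C * Z s) * (A * Z s) :=
      mul_le_mul hNb hZ'b (abs_nonneg _) (by positivity)
    rw [abs_div, abs_of_pos (pow_pos hZp 2), div_le_iff₀ (pow_pos hZp 2)]
    calc |N' s * Z s - N s * Z' s| ≤ |N' s * Z s| + |N s * Z' s| := abs_sub _ _
      _ = |N' s| * Z s + |N s| * |Z' s| := by rw [abs_mul, abs_mul, abs_of_pos hZp]
      _ ≤ A * C * Z s * Z s + (C * Z s) * (A * Z s) := add_le_add e1 e2
      _ = 2 * A * C * (Z s) ^ 2 := by ring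
  obtain ⟨ξ, hξ, hslope⟩ := exists_hasDerivAt_eq_slope f
    (fun s => (N' s * Z s - N s * Z' s) / (Z s) ^ 2) hρ
    (fun x _ => (hderiv x).continuousAt.continuousWithinAt)
    (fun x _ => hderiv x)
  have hfρ : f ρ - f 0 = ((N' ξ * Z ξ - N ξ * Z' ξ) / (Z ξ) ^ 2) * ρ := by
    rw [hslope, sub_zero, div_mul_cancel₀ _ hρ.ne']
  have : N ρ / Z ρ - N 0 / Z 0 = f ρ - f 0 := rfl
  rw [this, hfρ, abs_mul, abs_of_pos hρ]
  calc |(N' ξ * Z ξ - N ξ * Z' ξ) / Z ξ ^ 2| * ρ ≤ (2 * A * C) * ρ :=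
        mul_le_mul_of_nonneg_right (hbound ξ) hρ.le
    _ = 2 * ρ * A * C := by ring

lemma inner_gibbsMean {d : ℕ} (X : Finset (EuclideanSpace ℝ (Fin d)))
    (w u : EuclideanSpace ℝ (Fin d)) (s : ℝ) :
    ⟪gibbsMean X (s • w), u⟫_ℝ =
      (∑ x ∈ X, Real.exp (s * ⟪w, x⟫_ℝ) * ⟪x, u⟫_ℝ) /
        (∑ x ∈ X, Real.exp (s * ⟪w, x⟫_ℝ)) := by
  rw [gibbsMean, sum_inner]
  simp only [real_inner_smul_left, gibbs, div_mul_eq_mul_div]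
  rw [← Finset.sum_div]

/-- For every `w` and every `ρ ≥ 0`, the mean of the Gibbs distribution with
tilted parameter `ρw` is close to the uniform mean:
`‖E_{x∼φ(·;ρw)}[x] − E_{x∼U(X)}[x]‖₂ ≤ 2ρ‖w‖₂D²`. -/
theorem gibbs_tilted_mean_close_to_uniform {d : ℕ} (hd : 1 ≤ d)
    (X : Finset (EuclideanSpace ℝ (Fin d))) (hX : X.Nonempty)
    (D : ℝ) (hD : ∀ x ∈ X, ‖x‖ ≤ D) :
    ∀ (w : EuclideanSpace ℝ (Fin d)) (ρ : ℝ), 0 ≤ ρ →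
      ‖gibbsMean X (ρ • w) - unifMean X‖ ≤ 2 * ρ * ‖w‖ * D ^ 2 := by
  intro w ρ hρ
  obtain ⟨x0, hx0⟩ := hX
  have hD0 : 0 ≤ D := le_trans (norm_nonneg _) (hD x0 hx0)
  rcases eq_or_lt_of_le hρ with h0 | hρpos
  · rw [← h0, zero_smul, gibbsMean_zero, sub_self, norm_zero]
    simp
  set t := gibbsMean X (ρ • w) - unifMean X with ht_def
  by_cases ht : t = 0
  · rw [ht, norm_zero]
    have : 0 ≤ 2 * ρ * ‖w‖ * D ^ 2 := by positivity
    exact this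
  set u : EuclideanSpace ℝ (Fin d) := ‖t‖⁻¹ • t with hu_def
  have htn : ‖t‖ ≠ 0 := norm_ne_zero_iff.2 ht
  have hu : ‖u‖ = 1 := by
    rw [hu_def, norm_smul, norm_inv, norm_norm, inv_mul_cancel₀ htn]
  have hc : ∀ x ∈ X, |⟪x, u⟫_ℝ| ≤ D := fun x hx => by
    calc |⟪x, u⟫_ℝ| ≤ ‖x‖ * ‖u‖ := abs_real_inner_le_norm _ _
      _ = ‖x‖ := by rw [hu, mul_one]
      _ ≤ D := hD x hx
  have ha : ∀ x ∈ X, |⟪w, x⟫_ℝ| ≤ ‖w‖ * D := fun x hx => by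
    calc |⟪w, x⟫_ℝ| ≤ ‖w‖ * ‖x‖ := abs_real_inner_le_norm _ _
      _ ≤ ‖w‖ * D := mul_le_mul_of_nonneg_left (hD x hx) (norm_nonneg _)
  have h1 : ⟪t, u⟫_ℝ = ‖t‖ := by
    rw [hu_def, real_inner_smul_right, real_inner_self_eq_norm_sq, sq,
      inv_mul_cancel_left₀ htn]
  have h2 : ⟪t, u⟫_ℝ =
      (∑ x ∈ X, Real.exp (ρ * ⟪w, x⟫_ℝ) * ⟪x, u⟫_ℝ) /
        (∑ x ∈ X, Real.exp (ρ * ⟪w, x⟫_ℝ)) -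
      (∑ x ∈ X, Real.exp (0 * ⟪w, x⟫_ℝ) * ⟪x, u⟫_ℝ) /
        (∑ x ∈ X, Real.exp (0 * ⟪w, x⟫_ℝ)) := by
    have hum : unifMean X = gibbsMean X ((0:ℝ) • w) := by rw [zero_smul, gibbsMean_zero]
    rw [ht_def, inner_sub_left, inner_gibbsMean, hum, inner_gibbsMean]
  have hkey := tilted_avg_diff_le X ⟨x0, hx0⟩ (fun x => ⟪w, x⟫_ℝ) (fun x => ⟪x, u⟫_ℝ)
    (‖w‖ * D) D (by positivity) hD0 ha hc ρ hρpos
  calc ‖t‖ = ⟪t, u⟫_ℝ := h1.symm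
    _ ≤ |⟪t, u⟫_ℝ| := le_abs_self _
    _ ≤ 2 * ρ * (‖w‖ * D) * D := by rw [h2]; exact hkey
    _ = 2 * ρ * ‖w‖ * D ^ 2 := by ring

end
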